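/- Let n ≥ 2 and fix constants 0 < c' < 1 and M > 0. Then there exists δ > 0 such that for all ξ₁ ∈ ℝ and all v, ξ' ∈ ℝ^{n−1} with ‖ξ'‖² ≤ c' and ‖v‖ ≤ M, the complex number ξ₁² − 2ξ₁·(i − ⟨v,ξ'⟩)/(1 + ‖v‖²) − (1 − ‖ξ'‖²)/(1 + ‖v‖²) has modulus at least δ. -/

import Mathlib

open Complex

set_option maxHeartbeats 1000000

/-- Uniform ellipticity of the symbol of the boundary-flattened conjugated
Laplacian on the support of the low-frequency cutoff: for `0 < c' < 1` and
`M > 0` there is `δ > 0` such that for all `ξ₁ ∈ ℝ` and `v, ξ' ∈ ℝ^{n−1}` with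
`‖ξ'‖² ≤ c'` and `‖v‖ ≤ M`, the symbol
`ξ₁² − 2ξ₁(i − ⟨v,ξ'⟩)/(1+‖v‖²) − (1−‖ξ'‖²)/(1+‖v‖²)` has modulus at least `δ`. -/
theorem low_frequency_ellipticity (n : ℕ) (hn : 2 ≤ n)
    (c' M : ℝ) (hc0 : 0 < c') (hc1 : c' < 1) (hM : 0 < M) :
    ∃ δ > 0, ∀ (ξ₁ : ℝ) (v ξ' : EuclideanSpace ℝ (Fin (n - 1))),
      ‖ξ'‖ ^ 2 ≤ c' → ‖v‖ ≤ M →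
      δ ≤ ‖((ξ₁ : ℂ) ^ 2
          - 2 * (ξ₁ : ℂ) * (Complex.I - ((inner ℝ v ξ' : ℝ) : ℂ)) / (1 + (‖v‖ : ℂ) ^ 2)
          - (1 - (‖ξ'‖ : ℂ) ^ 2) / (1 + (‖v‖ : ℂ) ^ 2))‖ := by
  set ε : ℝ := (1 - c') / (1 + M ^ 2) with hε_def
  have hε : 0 < ε := by
    apply div_pos <;> nlinarith
  set t : ℝ := min 1 (ε / (2 * (1 + 2 * M))) with ht_def
  have ht : 0 < t := by
    apply lt_min one_pos
    positivity
  have ht1 : t ≤ 1 := min_le_left _ _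
  have ht2 : t ≤ ε / (2 * (1 + 2 * M)) := min_le_right _ _
  refine ⟨min (2 * t / (1 + M ^ 2)) (ε / 2), by positivity, ?_⟩
  intro ξ₁ v ξ' hs hv
  set a : ℝ := inner ℝ v ξ' with ha
  set b : ℝ := ‖v‖ with hb
  set s : ℝ := ‖ξ'‖ with hs'
  have hb0 : 0 ≤ b := norm_nonneg _
  have hb2 : (0:ℝ) < 1 + b ^ 2 := by positivity
  have hbM : 1 + b ^ 2 ≤ 1 + M ^ 2 := by nlinarith
  have hs1 : s ≤ 1 := by nlinarith [norm_nonneg ξ']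
  have haM : |a| ≤ M := by
    calc |a| ≤ b * s := abs_real_inner_le_norm v ξ'
    _ ≤ M * 1 := by apply mul_le_mul hv hs1 (norm_nonneg _) (le_of_lt hM)
    _ = M := mul_one M
  set X : ℝ := ξ₁ ^ 2 + 2 * ξ₁ * a / (1 + b ^ 2) - (1 - s ^ 2) / (1 + b ^ 2) with hX
  set Y : ℝ := -(2 * ξ₁) / (1 + b ^ 2) with hY
  have hne : (1 : ℂ) + (b : ℂ) ^ 2 ≠ 0 := by
    have : ((1 + b ^ 2 : ℝ) : ℂ) ≠ 0 := by exact_mod_cast ne_of_gt hb2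
    push_cast at this
    convert this using 2
  have hz : ((ξ₁ : ℂ) ^ 2
          - 2 * (ξ₁ : ℂ) * (Complex.I - ((inner ℝ v ξ' : ℝ) : ℂ)) / (1 + (‖v‖ : ℂ) ^ 2)
          - (1 - (‖ξ'‖ : ℂ) ^ 2) / (1 + (‖v‖ : ℂ) ^ 2))
      = (X : ℂ) + (Y : ℂ) * Complex.I := by
    rw [hX, hY, ← ha, ← hb, ← hs']
    have hne' : ((1 + b ^ 2 : ℝ) : ℂ) ≠ 0 := by exact_mod_cast ne_of_gt hb2
    push_cast
    field_simp
    ring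
  rw [hz]
  set z : ℂ := (X : ℂ) + (Y : ℂ) * Complex.I with hzdef
  have hre : z.re = X := by simp [hzdef]
  have him : z.im = Y := by simp [hzdef]
  clear_value z X Y a b s t ε
  rcases le_or_gt t |ξ₁| with hcase | hcase
  · -- use imaginary part
    have h1 : |Y| = 2 * |ξ₁| / (1 + b ^ 2) := by
      rw [hY, abs_div, abs_of_pos hb2, abs_neg, abs_mul]
      norm_num
    have h2 : 2 * t / (1 + M ^ 2) ≤ |Y| := by
      rw [h1]
      apply div_le_div₀ (by positivity) (by linarith) hb2 hbM
    calc min (2 * t / (1 + M ^ 2)) (ε / 2) ≤ 2 * t / (1 + M ^ 2) := min_le_left _ _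
      _ ≤ |Y| := h2
      _ = |z.im| := by rw [him]
      _ ≤ ‖z‖ := Complex.abs_im_le_norm z
  · -- use real part
    have htsmall : t ^ 2 + 2 * t * M ≤ ε / 2 := by
      have : t * (1 + 2 * M) ≤ ε / 2 := by
        rw [div_mul_eq_div_div] at ht2
        calc t * (1 + 2 * M) ≤ (ε / 2 / (1 + 2 * M)) * (1 + 2 * M) := by
              apply mul_le_mul_of_nonneg_right ht2 (by linarith)
          _ = ε / 2 := by field_simp
      nlinarith
    have hterm : |2 * ξ₁ * a / (1 + b ^ 2)| ≤ 2 * t * M := by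
      have h1 : |2 * ξ₁ * a / (1 + b ^ 2)| ≤ |2 * ξ₁ * a| := by
        rw [abs_div, abs_of_pos hb2]
        exact div_le_self (abs_nonneg _) (by nlinarith)
      have h2 : |2 * ξ₁ * a| = 2 * (|ξ₁| * |a|) := by
        rw [abs_mul, abs_mul]; norm_num; ring
      have h3 : |ξ₁| * |a| ≤ t * M :=
        mul_le_mul hcase.le haM (abs_nonneg a) ht.le
      linarith [h1, h2.le, h2.ge]
    have hbig : ε ≤ (1 - s ^ 2) / (1 + b ^ 2) := by
      rw [hε_def]
      apply div_le_div₀ (by linarith) (by linarith) hb2 hbM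
    have hXneg : X ≤ -(ε / 2) := by
      have hx1 : ξ₁ ^ 2 ≤ t ^ 2 := by nlinarith [abs_nonneg ξ₁, _root_.sq_abs ξ₁]
      have hx2 : 2 * ξ₁ * a / (1 + b ^ 2) ≤ 2 * t * M := le_trans (le_abs_self _) hterm
      rw [hX]
      linarith
    calc min (2 * t / (1 + M ^ 2)) (ε / 2) ≤ ε / 2 := min_le_right _ _
      _ ≤ |X| := by
          have hX0 : X ≤ 0 := by linarith [hXneg, hε]
          rw [abs_of_nonpos hX0]; linarith [hXneg]
      _ = |z.re| := by rw [hre]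
      _ ≤ ‖z‖ := Complex.abs_re_le_norm z
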